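/- For every n ≥ 1, the lecture hall cone L_n equals the set of all nonnegative real linear combinations of the n vectors u_1, …, u_n ∈ ℤ^n, where u_n := (0, …, 0, 1) and, for 1 ≤ k ≤ n−1, u_k is the vector whose j-th coordinate is j for k ≤ j ≤ n and 0 for j < k, i.e., u_k = (0, …, 0, k, k+1, …, n). (These vectors are the minimal ray generators of L_n.) -/

import Mathlib

/-- Membership in the (real) lecture hall cone
`L_n = {λ ∈ ℝⁿ : 0 ≤ λ_1/1 ≤ λ_2/2 ≤ ⋯ ≤ λ_n/n}`. -/
def IsLectureHallReal (n : ℕ) (l : Fin n → ℝ) : Prop :=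
  (∀ h : 0 < n, 0 ≤ l ⟨0, h⟩) ∧
  ∀ i : ℕ, ∀ h : i + 1 < n,
    ((i : ℝ) + 1) * l ⟨i + 1, h⟩ ≥ ((i : ℝ) + 2) * l ⟨i, by omega⟩

/-- The minimal ray generators of `L_n` (indexed by `k : Fin n`, where `k` corresponds to
the `1`-based index `k+1`): `u_n = (0,…,0,1)`, and for `1 ≤ k ≤ n-1`,
`u_k = (0,…,0,k,k+1,…,n)`, i.e. the `j`-th coordinate is `j` for `k ≤ j ≤ n` and `0`
otherwise. -/
def rayGen (n : ℕ) (k : Fin n) : Fin n → ℝ :=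
  if (k : ℕ) = n - 1 then fun j => if (j : ℕ) = n - 1 then 1 else 0
  else fun j => if (k : ℕ) ≤ (j : ℕ) then ((j : ℕ) + 1 : ℝ) else 0

lemma combo_eval (m : ℕ) (c : Fin (m+1) → ℝ) (b : ℕ → ℝ)
    (hb : ∀ k : Fin (m+1), b (k : ℕ) = c k) (j : Fin (m+1)) :
    (∑ k, c k • rayGen (m+1) k) j =
      if (j : ℕ) = m then c (Fin.last m) + ((m : ℝ) + 1) * ∑ k ∈ Finset.range m, b k
      else ((j : ℕ) + 1) * ∑ k ∈ Finset.range ((j : ℕ) + 1), b k := by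
  simp only [Finset.sum_apply, Pi.smul_apply, smul_eq_mul, rayGen]
  rw [Fin.sum_univ_castSucc]
  have hlast : ((Fin.last m : Fin (m+1)) : ℕ) = m := rfl
  have hcs : ∀ i : Fin m, ((i.castSucc : Fin (m+1)) : ℕ) = (i : ℕ) := fun i => rfl
  simp only [hlast, Nat.add_sub_cancel, hcs,
    apply_ite (fun f : Fin (m+1) → ℝ => f j), eq_self_iff_true, if_true]
  have hrest : ∀ i : Fin m,
      c i.castSucc * (if (i : ℕ) = m then (if (j:ℕ) = m then (1:ℝ) else 0) else
          if (i : ℕ) ≤ (j : ℕ) then ((j : ℕ) + 1 : ℝ) else 0)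
        = (if (i : ℕ) ≤ (j : ℕ) then b (i : ℕ) * ((j : ℕ) + 1 : ℝ) else 0) := by
    intro i
    rw [if_neg (by omega : ¬ (i:ℕ) = m), ← hb i.castSucc]
    simp only [hcs]
    by_cases hij : (i : ℕ) ≤ (j : ℕ)
    · rw [if_pos hij, if_pos hij]
    · rw [if_neg hij, if_neg hij, mul_zero]
  rw [Finset.sum_congr rfl (fun i _ => hrest i)]
  have hsum : ∀ t : ℕ, t ≤ m →
      (∑ i : Fin m, if (i : ℕ) ≤ (j : ℕ) then b (i : ℕ) * ((j : ℕ) + 1 : ℝ) else 0)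
        = ∑ k ∈ Finset.range m, (if k ≤ (j : ℕ) then b k * ((j : ℕ) + 1 : ℝ) else 0) := by
    intro t _
    rw [Fin.sum_univ_eq_sum_range (fun k => if k ≤ (j:ℕ) then b k * ((j : ℕ) + 1 : ℝ) else 0) m]
  rw [hsum m le_rfl]
  by_cases hj : (j : ℕ) = m
  · rw [if_pos hj, if_pos hj]
    have : (∑ k ∈ Finset.range m, if k ≤ (j : ℕ) then b k * ((j : ℕ) + 1 : ℝ) else 0)
        = ∑ k ∈ Finset.range m, b k * ((m : ℝ) + 1) := by
      refine Finset.sum_congr rfl fun k hk => ?_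
      rw [if_pos (by simp at hk; omega), hj]
    rw [this, mul_one, ← Finset.sum_mul]
    ring
  · rw [if_neg hj, if_neg hj, mul_zero, add_zero]
    have hjm : (j : ℕ) + 1 ≤ m := by have := j.isLt; omega
    have : (∑ k ∈ Finset.range m, if k ≤ (j : ℕ) then b k * ((j : ℕ) + 1 : ℝ) else 0)
        = ∑ k ∈ Finset.range ((j : ℕ) + 1), b k * ((j : ℕ) + 1 : ℝ) := by
      rw [← Finset.sum_subset (Finset.range_subset_range.2 hjm)]
      · refine Finset.sum_congr rfl fun k hk => if_pos (by simp at hk; omega)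
      · intro k _ hk; simp at hk; rw [if_neg (by omega)]
    rw [this, ← Finset.sum_mul]
    ring

/-- For every `n ≥ 1`, the lecture hall cone `L_n` is the set of nonnegative real linear
combinations of the vectors `u_1, …, u_n`. -/
theorem lectureHallCone_eq_nonneg_combinations (n : ℕ) (hn : 1 ≤ n) :
    {l : Fin n → ℝ | IsLectureHallReal n l} =
      {x : Fin n → ℝ | ∃ c : Fin n → ℝ, (∀ k, 0 ≤ c k) ∧
        x = ∑ k, c k • rayGen n k} := by
  obtain ⟨m, rfl⟩ : ∃ m, n = m + 1 := ⟨n - 1, by omega⟩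
  ext l
  simp only [Set.mem_setOf_eq]
  constructor
  · rintro ⟨h0, hstep⟩
    set D : ℕ → ℝ := fun j => if h : j < m + 1 then l ⟨j, h⟩ / (j + 1) else 0 with hD
    set E : ℕ → ℝ := fun j => if j = 0 then 0 else D (j - 1) with hE
    set b : ℕ → ℝ := fun k =>
      if k = m then l (Fin.last m) - ((m : ℝ) + 1) * E m else E (k + 1) - E k with hb
    have hE0 : E 0 = 0 := by simp [hE]
    have hES : ∀ j : ℕ, E (j + 1) = D j := by intro j; simp [hE]
    have hDj : ∀ j : ℕ, ∀ h : j < m + 1, D j = l ⟨j, h⟩ / ((j : ℝ) + 1) := by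
      intro j h; simp [hD, h, Nat.lt_succ_iff.mp h]
    have hbm : b m = l (Fin.last m) - ((m : ℝ) + 1) * E m := by simp [hb]
    have hbk : ∀ k : ℕ, k ≠ m → b k = E (k + 1) - E k := by
      intro k hk; simp [hb, hk]
    refine ⟨fun k => b (k : ℕ), ?_, ?_⟩
    · -- nonnegativity of coefficients
      intro k
      show 0 ≤ b (k : ℕ)
      by_cases hk : (k : ℕ) = m
      · rw [show ((k : ℕ)) = m from hk, hbm]
        rcases Nat.eq_zero_or_pos m with hm | hm
        · subst hm
          rw [hE0]
          have h00 : (0:ℝ) ≤ l 0 := h0 (by omega)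
          push_cast
          linarith
        · have hEm : E m = l ⟨m - 1, by omega⟩ / ((m - 1 : ℕ) + 1) := by
            conv_lhs => rw [show m = m - 1 + 1 by omega]
            rw [hES, hDj (m - 1) (by omega)]
          have hs := hstep (m - 1) (by omega)
          have hc : ((m - 1 : ℕ) : ℝ) = (m : ℝ) - 1 := by
            have h1 : (1:ℕ) ≤ m := hm
            push_cast [h1]; ring
          have hlast : l (Fin.last m) = l ⟨m - 1 + 1, by omega⟩ := by
            congr 1; exact Fin.ext (by simp [Fin.last]; omega)
          have hmpos : (0:ℝ) < (m:ℝ) := by exact_mod_cast hm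
          rw [hEm, hlast, hc, sub_nonneg, show (m:ℝ) - 1 + 1 = (m:ℝ) by ring,
            ← mul_div_assoc, div_le_iff₀ hmpos]
          rw [hc] at hs
          nlinarith [hs]
      · have hk' : (k : ℕ) < m := by have := k.isLt; omega
        rw [hbk _ hk]
        rcases Nat.eq_zero_or_pos (k : ℕ) with h0k | h0k
        · rw [h0k, hES, hE0, sub_zero, hDj 0 (by omega)]
          have := h0 (by omega)
          positivity
        · obtain ⟨i, hki⟩ : ∃ i, (k : ℕ) = i + 1 := ⟨(k:ℕ) - 1, by omega⟩
          rw [hki, hES, hES, hDj (i+1) (by omega), hDj i (by omega), sub_nonneg,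
            div_le_div_iff₀ (by positivity) (by positivity)]
          have hs := hstep i (by omega)
          push_cast
          nlinarith [hs]
    · -- reconstruction
      funext j
      rw [combo_eval m _ b (fun k => rfl) j]
      have hEsum : ∀ t : ℕ, t ≤ m → ∑ k ∈ Finset.range t, b k = E t := by
        intro t ht
        have hterm : ∀ k ∈ Finset.range t, b k = E (k + 1) - E k := by
          intro k hk; simp only [Finset.mem_range] at hk; exact hbk k (by omega)
        rw [Finset.sum_congr rfl hterm, Finset.sum_range_sub E t, hE0, sub_zero]
      by_cases hj : (j : ℕ) = m
      · rw [if_pos hj, hEsum m le_rfl,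
          show ((Fin.last m : Fin (m+1)) : ℕ) = m from rfl, hbm]
        have hjl : j = Fin.last m := Fin.ext (by simpa using hj)
        rw [hjl]
        ring
      · rw [if_neg hj, hEsum ((j:ℕ)+1) (by have := j.isLt; omega), hES,
          hDj (j:ℕ) j.isLt]
        have hj' : (⟨(j:ℕ), j.isLt⟩ : Fin (m+1)) = j := rfl
        rw [hj']
        field_simp
  · rintro ⟨c, hc, rfl⟩
    set b : ℕ → ℝ := fun k => if h : k < m + 1 then c ⟨k, h⟩ else 0 with hb
    have hbc : ∀ k : Fin (m+1), b (k : ℕ) = c k := by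
      intro k; simp [hb, k.isLt, Nat.lt_succ_iff.mp k.isLt]
    have hbnn : ∀ k, 0 ≤ b k := by
      intro k
      rcases Nat.lt_or_ge k (m+1) with h | h
      · rw [show b k = c ⟨k, h⟩ by simp [hb, h, Nat.lt_succ_iff.mp h]]; exact hc _
      · rw [show b k = 0 by simp [hb]; omega]
    have hSmono : ∀ s t : ℕ, s ≤ t →
        ∑ k ∈ Finset.range s, b k ≤ ∑ k ∈ Finset.range t, b k := by
      intro s t hst
      exact Finset.sum_le_sum_of_subset_of_nonneg (Finset.range_subset_range.2 hst)
        (fun k _ _ => hbnn k)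
    have hSnn : ∀ t : ℕ, 0 ≤ ∑ k ∈ Finset.range t, b k :=
      fun t => Finset.sum_nonneg fun k _ => hbnn k
    constructor
    · intro h
      rw [combo_eval m c b hbc ⟨0, h⟩]
      by_cases hm : ((⟨0, h⟩ : Fin (m+1)) : ℕ) = m
      · rw [if_pos hm]
        have h1 := hc (Fin.last m)
        have h2 := hSnn m
        have h3 : (0:ℝ) ≤ (m:ℝ) + 1 := by positivity
        nlinarith
      · rw [if_neg hm]
        have := hSnn (((⟨0, h⟩ : Fin (m+1)) : ℕ) + 1)
        positivity
    · intro i hi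
      rw [combo_eval m c b hbc ⟨i+1, hi⟩, combo_eval m c b hbc ⟨i, by omega⟩]
      have him : ¬ (((⟨i, by omega⟩ : Fin (m+1)) : ℕ) = m) := by simp; omega
      rw [if_neg him]
      by_cases hi1 : ((⟨i+1, hi⟩ : Fin (m+1)) : ℕ) = m
      · rw [if_pos hi1]
        simp only at hi1 him ⊢
        have hcl := hc (Fin.last m)
        have hmm : (m : ℝ) = (i : ℝ) + 1 := by exact_mod_cast hi1.symm
        have h1 := hSnn (i+1)
        have hsum : ∑ k ∈ Finset.range m, b k = ∑ k ∈ Finset.range (i+1), b k := by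
          rw [hi1]
        rw [hsum, hmm]
        nlinarith [h1, hcl, mul_nonneg (show (0:ℝ) ≤ (i:ℝ)+1 by positivity) hcl]
      · rw [if_neg hi1]
        simp only at hi1 him ⊢
        have hmono := hSmono (i+1) (i+1+1) (by omega)
        have key := mul_le_mul_of_nonneg_left hmono
          (show (0:ℝ) ≤ ((i:ℝ)+1)*((i:ℝ)+2) by positivity)
        push_cast
        nlinarith [key]
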